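/- (Theorem 2) Let y = A·x_S where x_S ∈ ℝⁿ is K-sparse with support S, and A satisfies the RIP of order 3K with constant δ_{3K} < 1 such that ρ_{3K} := √(2δ_{3K}²(1+δ_{3K}²))/(1−δ_{3K}²) < 1. Let (x^n)_{n ≥ 0} be Subspace Pursuit iterates starting from x^0 = 0, each obtained from the previous by one SP iteration. Then x^{⌈cK⌉} = x_S, where c = ln(4/ρ_{3K}²)/ln(1/ρ_{3K}²). -/

import Mathlib

set_option maxHeartbeats 1000000



open Finset

/-- Euclidean norm of a vector. -/
noncomputable def euclNorm {d : ℕ} (x : Fin d → ℝ) : ℝ := Real.sqrt (∑ i, x i ^ 2)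

/-- The support of a vector, as a finite set of indices. -/
noncomputable def supp {d : ℕ} (x : Fin d → ℝ) : Finset (Fin d) :=
  Finset.univ.filter (fun i => x i ≠ 0)

/-- `restrict x T` agrees with `x` on `T` and is zero outside `T`. -/
def restrict {d : ℕ} (x : Fin d → ℝ) (T : Finset (Fin d)) : Fin d → ℝ :=
  fun i => if i ∈ T then x i else 0

/-- `A` satisfies the Restricted Isometry Property of order `L` with constant `δ ∈ (0,1)`. -/
def RIP {m d : ℕ} (A : Matrix (Fin m) (Fin d) ℝ) (L : ℕ) (δ : ℝ) : Prop :=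
  0 < δ ∧ δ < 1 ∧
  ∀ x : Fin d → ℝ, (supp x).card ≤ L →
    (1 - δ) * euclNorm x ^ 2 ≤ euclNorm (A.mulVec x) ^ 2 ∧
    euclNorm (A.mulVec x) ^ 2 ≤ (1 + δ) * euclNorm x ^ 2

/-- `u` is the least-squares solution on the index set `U`: it is supported on `U` and
`y - A u` is orthogonal to `A z` whenever `z` is supported on `U`. -/
def LeastSq {m d : ℕ} (A : Matrix (Fin m) (Fin d) ℝ) (y : Fin m → ℝ)
    (U : Finset (Fin d)) (u : Fin d → ℝ) : Prop :=
  supp u ⊆ U ∧ ∀ z : Fin d → ℝ, supp z ⊆ U →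
    ∑ i, (y i - A.mulVec u i) * A.mulVec z i = 0

/-- One Subspace Pursuit iteration with sparsity `K`, mapping the iterate `xprev` to
`xnext`: identification (`h`, the `K` largest residual correlations), augmentation
(`supp xprev ∪ h`), least-squares estimation (`u`), selection of the `K` largest
entries of `u` (`Snext`), and a final least-squares solve on `Snext`. -/
def SPStep {m d : ℕ} (K : ℕ) (A : Matrix (Fin m) (Fin d) ℝ) (y : Fin m → ℝ)
    (xprev xnext : Fin d → ℝ) : Prop :=
  ∃ (h Snext : Finset (Fin d)) (u : Fin d → ℝ),
    h.card = K ∧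
    (∀ i ∈ h, ∀ j ∉ h,
      |A.transpose.mulVec (y - A.mulVec xprev) j| ≤
        |A.transpose.mulVec (y - A.mulVec xprev) i|) ∧
    LeastSq A y (supp xprev ∪ h) u ∧
    Snext ⊆ supp xprev ∪ h ∧ Snext.card = K ∧
    (∀ i ∈ Snext, ∀ j ∉ Snext, |u j| ≤ |u i|) ∧
    LeastSq A y Snext xnext

namespace SPaux

/-- squared ℓ² mass of `a` on the index set `T` -/
noncomputable def SS {n : ℕ} (T : Finset (Fin n)) (a : Fin n → ℝ) : ℝ := ∑ j ∈ T, a j ^ 2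

/-- total squared ℓ² mass -/
noncomputable def N2 {n : ℕ} (a : Fin n → ℝ) : ℝ := ∑ i, a i ^ 2

lemma SS_nonneg {n : ℕ} (T : Finset (Fin n)) (a : Fin n → ℝ) : 0 ≤ SS T a := by
  unfold SS; positivity

lemma N2_nonneg {n : ℕ} (a : Fin n → ℝ) : 0 ≤ N2 a := by unfold N2; positivity

lemma N2_eq_SS_univ {n : ℕ} (a : Fin n → ℝ) : N2 a = SS Finset.univ a := rfl

lemma SS_mono {n : ℕ} {T T' : Finset (Fin n)} (h : T ⊆ T') (a : Fin n → ℝ) :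
    SS T a ≤ SS T' a :=
  Finset.sum_le_sum_of_subset_of_nonneg h (fun i _ _ => by positivity)

lemma SS_le_N2 {n : ℕ} (T : Finset (Fin n)) (a : Fin n → ℝ) : SS T a ≤ N2 a :=
  SS_mono (Finset.subset_univ T) a

lemma euclNorm_sq {n : ℕ} (a : Fin n → ℝ) : euclNorm a ^ 2 = N2 a :=
  Real.sq_sqrt (by positivity)

lemma mem_supp {n : ℕ} {x : Fin n → ℝ} {j : Fin n} : j ∈ supp x ↔ x j ≠ 0 := by
  simp [supp]

lemma not_mem_supp {n : ℕ} {x : Fin n → ℝ} {j : Fin n} (h : j ∉ supp x) : x j = 0 := by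
  by_contra hc; exact h (mem_supp.mpr hc)

lemma supp_zero {n : ℕ} : supp (0 : Fin n → ℝ) = ∅ := by
  ext j; simp [supp]

/-- SS splits over sdiff decomposition : if every j∈T with a j ≠ 0 lies in T', T' ⊆ T then equal-ish;
    we mostly use: SS over a set where a vanishes off a subset. -/
lemma SS_eq_of_zero_off {n : ℕ} {T T' : Finset (Fin n)} {a : Fin n → ℝ} (h : T' ⊆ T)
    (hz : ∀ j ∈ T, j ∉ T' → a j = 0) : SS T a = SS T' a := by
  unfold SS
  exact (Finset.sum_subset h (fun j hj hj' => by rw [hz j hj hj']; ring)).symm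

end SPaux

namespace SPcore
open SPaux

variable {m d : ℕ} (A : Matrix (Fin m) (Fin d) ℝ)

/-- the RIP defect bilinear form -/
noncomputable def Bf (ξ ζ : Fin d → ℝ) : ℝ :=
  (∑ i, A.mulVec ξ i * A.mulVec ζ i) - ∑ j, ξ j * ζ j

lemma sum_sq_eq_mul_self {n : ℕ} (f : Fin n → ℝ) : ∑ i, f i ^ 2 = ∑ i, f i * f i := by
  apply Finset.sum_congr rfl; intros; ring

lemma polar_aux {n : ℕ} (f g : Fin n → ℝ) :
    (∑ i, (f i + g i) * (f i + g i)) - (∑ i, (f i - g i) * (f i - g i))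
      = 4 * ∑ i, f i * g i := by
  rw [← Finset.sum_sub_distrib, Finset.mul_sum]
  apply Finset.sum_congr rfl; intros; ring

lemma parallel_aux {n : ℕ} (f g : Fin n → ℝ) :
    (∑ i, (f i + g i) ^ 2) + (∑ i, (f i - g i) ^ 2)
      = 2 * (∑ i, f i ^ 2) + 2 * ∑ i, g i ^ 2 := by
  rw [← Finset.sum_add_distrib, Finset.mul_sum, Finset.mul_sum, ← Finset.sum_add_distrib]
  apply Finset.sum_congr rfl; intros; ring

lemma Bf_polar (ξ ζ : Fin d → ℝ) :
    Bf A (ξ + ζ) (ξ + ζ) - Bf A (ξ - ζ) (ξ - ζ) = 4 * Bf A ξ ζ := by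
  unfold Bf
  simp only [Matrix.mulVec_add, Matrix.mulVec_sub, Pi.add_apply, Pi.sub_apply]
  have h1 := polar_aux (A.mulVec ξ) (A.mulVec ζ)
  have h2 := polar_aux ξ ζ
  ring_nf
  ring_nf at h1 h2
  linarith

lemma supp_add_subset (ξ ζ : Fin d → ℝ) : supp (ξ + ζ) ⊆ supp ξ ∪ supp ζ := by
  intro j hj
  rw [mem_supp] at hj
  by_contra hc
  simp only [Finset.mem_union, mem_supp] at hc
  push_neg at hc
  exact hj (by simp [Pi.add_apply, hc.1, hc.2])

lemma supp_sub_subset (ξ ζ : Fin d → ℝ) : supp (ξ - ζ) ⊆ supp ξ ∪ supp ζ := by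
  intro j hj
  rw [mem_supp] at hj
  by_contra hc
  simp only [Finset.mem_union, mem_supp] at hc
  push_neg at hc
  exact hj (by simp [Pi.sub_apply, hc.1, hc.2])

lemma supp_smul_subset (t : ℝ) (ξ : Fin d → ℝ) : supp (t • ξ) ⊆ supp ξ := by
  intro j hj
  rw [mem_supp] at hj ⊢
  intro hc
  exact hj (by simp [Pi.smul_apply, hc])

variable {A}

/-- RIP as a two-sided bound on the quadratic defect -/
lemma Bf_self_le {L : ℕ} {δ : ℝ} (hA : RIP A L δ) {ξ : Fin d → ℝ}
    (hs : (supp ξ).card ≤ L) : |Bf A ξ ξ| ≤ δ * N2 ξ := by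
  obtain ⟨-, -, h⟩ := hA
  obtain ⟨h1, h2⟩ := h ξ hs
  rw [euclNorm_sq, euclNorm_sq] at h1 h2
  have : Bf A ξ ξ = N2 (A.mulVec ξ) - N2 ξ := by
    unfold Bf N2; rw [sum_sq_eq_mul_self, sum_sq_eq_mul_self]
  rw [this, abs_le]
  constructor <;> nlinarith [N2_nonneg ξ]

lemma Bf_le_half {L : ℕ} {δ : ℝ} (hA : RIP A L δ) {T : Finset (Fin d)}
    (hT : T.card ≤ L) {ξ ζ : Fin d → ℝ} (hξ : supp ξ ⊆ T) (hζ : supp ζ ⊆ T) :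
    |Bf A ξ ζ| ≤ δ / 2 * (N2 ξ + N2 ζ) := by
  have hδ : 0 < δ := hA.1
  have hp : (supp (ξ + ζ)).card ≤ L :=
    le_trans (Finset.card_le_card ((supp_add_subset ξ ζ).trans (Finset.union_subset hξ hζ))) hT
  have hm : (supp (ξ - ζ)).card ≤ L :=
    le_trans (Finset.card_le_card ((supp_sub_subset ξ ζ).trans (Finset.union_subset hξ hζ))) hT
  have b1 := Bf_self_le hA hp
  have b2 := Bf_self_le hA hm
  have hpol := Bf_polar A ξ ζ
  have hpar : N2 (ξ + ζ) + N2 (ξ - ζ) = 2 * N2 ξ + 2 * N2 ζ := by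
    unfold N2; exact parallel_aux ξ ζ
  have hN1 : 0 ≤ N2 (ξ + ζ) := N2_nonneg _
  have hN2 : 0 ≤ N2 (ξ - ζ) := N2_nonneg _
  rw [abs_le] at b1 b2 ⊢
  constructor <;> nlinarith

lemma Bf_smul_left (t : ℝ) (ξ ζ : Fin d → ℝ) : Bf A (t • ξ) ζ = t * Bf A ξ ζ := by
  unfold Bf
  rw [Matrix.mulVec_smul]
  simp only [Pi.smul_apply, smul_eq_mul]
  rw [mul_sub, Finset.mul_sum, Finset.mul_sum]
  congr 1 <;> (apply Finset.sum_congr rfl; intros; ring)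

lemma Bf_smul_right (t : ℝ) (ξ ζ : Fin d → ℝ) : Bf A ξ (t • ζ) = t * Bf A ξ ζ := by
  unfold Bf
  rw [Matrix.mulVec_smul]
  simp only [Pi.smul_apply, smul_eq_mul]
  rw [mul_sub, Finset.mul_sum, Finset.mul_sum]
  congr 1 <;> (apply Finset.sum_congr rfl; intros; ring)

lemma N2_eq_zero_iff {n : ℕ} {a : Fin n → ℝ} : N2 a = 0 ↔ a = 0 := by
  constructor
  · intro h
    funext j
    have := (Finset.sum_eq_zero_iff_of_nonneg (fun i _ => by positivity)).mp h j (Finset.mem_univ j)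
    exact pow_eq_zero_iff (n := 2) (by norm_num) |>.mp this
  · rintro rfl; unfold N2; simp

lemma Bf_zero_left (ζ : Fin d → ℝ) : Bf A 0 ζ = 0 := by
  unfold Bf
  rw [Matrix.mulVec_zero]
  simp

lemma Bf_comm (ξ ζ : Fin d → ℝ) : Bf A ξ ζ = Bf A ζ ξ := by
  unfold Bf
  congr 1 <;> (apply Finset.sum_congr rfl; intros; ring)

/-- near-orthogonality / full bilinear RIP defect bound -/
lemma Bf_le {L : ℕ} {δ : ℝ} (hA : RIP A L δ) {T : Finset (Fin d)}
    (hT : T.card ≤ L) {ξ ζ : Fin d → ℝ} (hξ : supp ξ ⊆ T) (hζ : supp ζ ⊆ T) :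
    |Bf A ξ ζ| ≤ δ * Real.sqrt (N2 ξ) * Real.sqrt (N2 ζ) := by
  have hδ : 0 < δ := hA.1
  rcases eq_or_ne (N2 ξ) 0 with h0 | h0
  · rw [N2_eq_zero_iff.mp h0, Bf_zero_left]
    simp only [abs_zero]
    positivity
  rcases eq_or_ne (N2 ζ) 0 with h1 | h1
  · rw [N2_eq_zero_iff.mp h1, Bf_comm, Bf_zero_left]
    simp only [abs_zero]
    positivity
  have hξp : 0 < N2 ξ := lt_of_le_of_ne (N2_nonneg ξ) (Ne.symm h0)
  have hζp : 0 < N2 ζ := lt_of_le_of_ne (N2_nonneg ζ) (Ne.symm h1)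
  set a := Real.sqrt (N2 ξ) with ha
  set b := Real.sqrt (N2 ζ) with hb
  have hap : 0 < a := Real.sqrt_pos.mpr hξp
  have hbp : 0 < b := Real.sqrt_pos.mpr hζp
  set t := Real.sqrt (b / a) with ht
  have htp : 0 < t := Real.sqrt_pos.mpr (by positivity)
  have ht2 : t ^ 2 = b / a := Real.sq_sqrt (by positivity)
  have key := Bf_le_half hA hT (ξ := t • ξ) (ζ := t⁻¹ • ζ)
    ((supp_smul_subset t ξ).trans hξ) ((supp_smul_subset t⁻¹ ζ).trans hζ)
  rw [Bf_smul_left, Bf_smul_right] at key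
  have hN2s : N2 (t • ξ) = t ^ 2 * N2 ξ := by
    unfold N2; rw [Finset.mul_sum]; apply Finset.sum_congr rfl; intros; simp [Pi.smul_apply]; ring
  have hN2s' : N2 (t⁻¹ • ζ) = (t ^ 2)⁻¹ * N2 ζ := by
    unfold N2; rw [Finset.mul_sum]; apply Finset.sum_congr rfl; intros
    simp [Pi.smul_apply]; ring
  rw [hN2s, hN2s', abs_mul, abs_mul, abs_of_pos htp, abs_of_pos (inv_pos.mpr htp)] at key
  have haa : N2 ξ = a ^ 2 := (Real.sq_sqrt (N2_nonneg ξ)).symm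
  have hbb : N2 ζ = b ^ 2 := (Real.sq_sqrt (N2_nonneg ζ)).symm
  have h1' : t ^ 2 * N2 ξ = a * b := by rw [ht2, haa]; field_simp
  have h2' : (t ^ 2)⁻¹ * N2 ζ = a * b := by rw [ht2, hbb]; field_simp
  have : t * (t⁻¹ * |Bf A ξ ζ|) = |Bf A ξ ζ| := by field_simp
  rw [h1', h2'] at key
  nlinarith [abs_nonneg (Bf A ξ ζ)]

end SPcore

namespace SPcore
open SPaux

variable {m d : ℕ} {A : Matrix (Fin m) (Fin d) ℝ}

/-- standard basis vector -/
def ej {n : ℕ} (j : Fin n) : Fin n → ℝ := fun k => if k = j then 1 else 0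

lemma supp_ej {n : ℕ} (j : Fin n) : supp (ej j) ⊆ {j} := by
  intro k hk
  rw [mem_supp] at hk
  unfold ej at hk
  by_contra hc
  simp only [Finset.mem_singleton] at hc
  exact hk (if_neg hc)

lemma mulVec_ej (A : Matrix (Fin m) (Fin d) ℝ) (j : Fin d) (i : Fin m) :
    A.mulVec (ej j) i = A i j := by
  unfold Matrix.mulVec ej dotProduct
  simp

lemma tmulVec_apply (A : Matrix (Fin m) (Fin d) ℝ) (v : Fin m → ℝ) (j : Fin d) :
    A.transpose.mulVec v j = ∑ i, v i * A i j := by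
  unfold Matrix.mulVec dotProduct Matrix.transpose
  simp only [Matrix.of_apply]
  apply Finset.sum_congr rfl
  intros; ring

/-- transpose pairing identity -/
lemma tmul_pair (A : Matrix (Fin m) (Fin d) ℝ) (v : Fin m → ℝ) (ζ : Fin d → ℝ) :
    ∑ j, A.transpose.mulVec v j * ζ j = ∑ i, v i * A.mulVec ζ i := by
  unfold Matrix.mulVec dotProduct Matrix.transpose
  simp only [Matrix.of_apply]
  calc ∑ j, (∑ i, A i j * v i) * ζ j
      = ∑ j, ∑ i, A i j * v i * ζ j := by
        apply Finset.sum_congr rfl; intros; rw [Finset.sum_mul]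
    _ = ∑ i, ∑ j, A i j * v i * ζ j := Finset.sum_comm
    _ = ∑ i, v i * ∑ j, A i j * ζ j := by
        apply Finset.sum_congr rfl; intros
        rw [Finset.mul_sum]
        apply Finset.sum_congr rfl; intros; ring

/-- the Gram-defect operator localized to the index set `T` -/
noncomputable def Ev (A : Matrix (Fin m) (Fin d) ℝ) (T : Finset (Fin d)) (ξ : Fin d → ℝ) :
    Fin d → ℝ :=
  fun j => if j ∈ T then A.transpose.mulVec (A.mulVec ξ) j - ξ j else 0

lemma Ev_coord (T : Finset (Fin d)) (ξ : Fin d → ℝ) {j : Fin d} (hj : j ∈ T) :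
    A.transpose.mulVec (A.mulVec ξ) j = ξ j + Ev A T ξ j := by
  unfold Ev
  rw [if_pos hj]
  ring

lemma supp_Ev (T : Finset (Fin d)) (ξ : Fin d → ℝ) : supp (Ev A T ξ) ⊆ T := by
  intro j hj
  rw [mem_supp] at hj
  by_contra hc
  exact hj (by unfold Ev; rw [if_neg hc])

lemma ip_Ev (T : Finset (Fin d)) (ξ : Fin d → ℝ) {ζ : Fin d → ℝ} (hζ : supp ζ ⊆ T) :
    ∑ j, Ev A T ξ j * ζ j = Bf A ξ ζ := by
  have h1 : ∀ j, Ev A T ξ j * ζ j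
      = (A.transpose.mulVec (A.mulVec ξ) j - ξ j) * ζ j := by
    intro j
    by_cases hj : j ∈ T
    · unfold Ev; rw [if_pos hj]
    · have hz : ζ j = 0 := by
        by_contra hc
        exact hj (hζ (mem_supp.mpr hc))
      unfold Ev; rw [if_neg hj, hz]; ring
  calc ∑ j, Ev A T ξ j * ζ j
      = ∑ j, (A.transpose.mulVec (A.mulVec ξ) j - ξ j) * ζ j := by
        apply Finset.sum_congr rfl; intro j _; exact h1 j
    _ = (∑ j, A.transpose.mulVec (A.mulVec ξ) j * ζ j) - ∑ j, ξ j * ζ j := by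
        rw [← Finset.sum_sub_distrib]
        apply Finset.sum_congr rfl; intros; ring
    _ = Bf A ξ ζ := by rw [tmul_pair]; rfl

/-- fundamental bound : ‖E ξ‖² ≤ δ² ‖ξ‖² -/
lemma N2_Ev_le {L : ℕ} {δ : ℝ} (hA : RIP A L δ) {T : Finset (Fin d)}
    (hT : T.card ≤ L) {ξ : Fin d → ℝ} (hξ : supp ξ ⊆ T) :
    N2 (Ev A T ξ) ≤ δ ^ 2 * N2 ξ := by
  have hδ : 0 < δ := hA.1
  have h1 : N2 (Ev A T ξ) = Bf A ξ (Ev A T ξ) := by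
    rw [← ip_Ev T ξ (supp_Ev T ξ)]
    unfold N2
    rw [sum_sq_eq_mul_self]
  have h2 := Bf_le hA hT (ζ := Ev A T ξ) hξ (supp_Ev T ξ)
  set a := Real.sqrt (N2 (Ev A T ξ)) with ha
  set b := Real.sqrt (N2 ξ) with hb
  have haa : N2 (Ev A T ξ) = a ^ 2 := (Real.sq_sqrt (N2_nonneg _)).symm
  have hbb : N2 ξ = b ^ 2 := (Real.sq_sqrt (N2_nonneg _)).symm
  have han : 0 ≤ a := Real.sqrt_nonneg _
  have hbn : 0 ≤ b := Real.sqrt_nonneg _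
  have key : a ^ 2 ≤ δ * b * a := by
    rw [← haa, h1]
    calc Bf A ξ (Ev A T ξ) ≤ |Bf A ξ (Ev A T ξ)| := le_abs_self _
      _ ≤ δ * b * a := h2
  have : a ≤ δ * b := by
    rcases eq_or_lt_of_le han with h0 | h0
    · rw [← h0]; positivity
    · nlinarith
  rw [haa, hbb]
  nlinarith

/-- orthogonality at a coordinate, from the least-squares property -/
lemma orth_coord {y : Fin m → ℝ} {xp : Fin d → ℝ} {V : Finset (Fin d)}
    (hq : ∀ z : Fin d → ℝ, supp z ⊆ V →
      ∑ i, (y i - A.mulVec xp i) * A.mulVec z i = 0)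
    {j : Fin d} (hj : j ∈ V) :
    A.transpose.mulVec (fun i => y i - A.mulVec xp i) j = 0 := by
  rw [tmulVec_apply]
  have h0 := hq (ej j) ((supp_ej j).trans (Finset.singleton_subset_iff.mpr hj))
  rw [← h0]
  apply Finset.sum_congr rfl
  intro i _
  rw [mulVec_ej]

end SPcore

namespace SPcore
open SPaux

variable {m d : ℕ} {A : Matrix (Fin m) (Fin d) ℝ}

lemma pairing_sq {n : ℕ} {c : Fin n → ℝ} {Z Φ : Finset (Fin n)}
    (hcard : Z.card ≤ Φ.card)
    (hpt : ∀ j ∈ Z, ∀ i ∈ Φ, c j ^ 2 ≤ c i ^ 2) : SS Z c ≤ SS Φ c := by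
  rcases Φ.eq_empty_or_nonempty with rfl | hΦ
  · have hZ : Z = ∅ := Finset.card_eq_zero.mp (Nat.le_zero.mp (by simpa using hcard))
    subst hZ
    simp [SS]
  · set μ := Φ.inf' hΦ (fun i => c i ^ 2) with hμ
    obtain ⟨i0, hi0, he⟩ := Finset.exists_mem_eq_inf' hΦ (fun i => c i ^ 2)
    have hμn : 0 ≤ μ := by rw [hμ, he]; positivity
    have h1 : SS Z c ≤ (Z.card : ℝ) * μ := by
      unfold SS
      calc ∑ j ∈ Z, c j ^ 2 ≤ ∑ _j ∈ Z, μ :=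
            Finset.sum_le_sum (fun j hj => Finset.le_inf' hΦ _ (fun i hi => hpt j hj i hi))
        _ = (Z.card : ℝ) * μ := by rw [Finset.sum_const, nsmul_eq_mul]
    have h2 : (Φ.card : ℝ) * μ ≤ SS Φ c := by
      unfold SS
      calc (Φ.card : ℝ) * μ = ∑ _i ∈ Φ, μ := by rw [Finset.sum_const, nsmul_eq_mul]
        _ ≤ ∑ i ∈ Φ, c i ^ 2 := Finset.sum_le_sum (fun i hi => Finset.inf'_le _ hi)
    have h3 : (Z.card : ℝ) * μ ≤ (Φ.card : ℝ) * μ :=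
      mul_le_mul_of_nonneg_right (Nat.cast_le.mpr hcard) hμn
    linarith

lemma main_step {K : ℕ} {x : Fin d → ℝ} {δ : ℝ}
    (hA : RIP A (3 * K) δ) (hx : (supp x).card ≤ K)
    {Sp : Finset (Fin d)} {xprev : Fin d → ℝ}
    (hSp : Sp.card ≤ K) (hprev : supp xprev ⊆ Sp)
    (horth : ∀ z : Fin d → ℝ, supp z ⊆ Sp →
      ∑ i, (A.mulVec x i - A.mulVec xprev i) * A.mulVec z i = 0)
    {h Sn : Finset (Fin d)} {u : Fin d → ℝ}
    (hcard : h.card = K)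
    (hmax : ∀ i ∈ h, ∀ j ∉ h,
      |A.transpose.mulVec (A.mulVec x - A.mulVec xprev) j| ≤
        |A.transpose.mulVec (A.mulVec x - A.mulVec xprev) i|)
    (hLSu : LeastSq A (A.mulVec x) (supp xprev ∪ h) u)
    (hSnsub : Sn ⊆ supp xprev ∪ h) (hSncard : Sn.card = K)
    (humax : ∀ i ∈ Sn, ∀ j ∉ Sn, |u j| ≤ |u i|) :
    SS ((supp x) \ Sn) x ≤ (2 * δ ^ 2 * (1 + δ ^ 2) / (1 - δ ^ 2) ^ 2) * SS ((supp x) \ Sp) x := by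
  have hδ0 : 0 < δ := hA.1
  have hδ1 : δ < 1 := hA.2.1
  have hd2 : 0 < 1 - δ ^ 2 := by nlinarith
  set S := supp x with hS
  set U := supp xprev ∪ h with hU
  set Ω := h \ (S ∪ Sp) with hΩ
  set T := (S ∪ Sp) ∪ Ω with hT
  set w := x - xprev with hw
  -- cardinalities
  have hTcard : T.card ≤ 3 * K := by
    have h1 : T.card ≤ (S ∪ Sp).card + Ω.card := Finset.card_union_le _ _
    have h2 : (S ∪ Sp).card ≤ S.card + Sp.card := Finset.card_union_le _ _
    have h3 : Ω.card ≤ h.card := Finset.card_le_card (Finset.sdiff_subset)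
    omega
  have hwub : supp w ⊆ S ∪ Sp := by
    intro j hj
    rw [mem_supp] at hj
    rw [Finset.mem_union]
    by_contra hc
    push_neg at hc
    have hx0 : x j = 0 := not_mem_supp hc.1
    have hp0 : xprev j = 0 := not_mem_supp (fun hm => hc.2 (hprev hm))
    exact hj (by simp [hw, Pi.sub_apply, hx0, hp0])
  have hST : S ∪ Sp ⊆ T := Finset.subset_union_left
  have hwT : supp w ⊆ T := hwub.trans hST
  set Ew := Ev A T w with hEwdef
  have hEw : N2 Ew ≤ δ ^ 2 * N2 w := N2_Ev_le hA hTcard hwT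
  -- coordinates of A^T A w
  have hEco : ∀ j ∈ T, A.transpose.mulVec (A.mulVec w) j = w j + Ew j :=
    fun j hj => Ev_coord T w hj
  have hcSp : ∀ j ∈ Sp, A.transpose.mulVec (A.mulVec w) j = 0 := by
    intro j hj
    have h0 : A.transpose.mulVec (fun i => A.mulVec x i - A.mulVec xprev i) j = 0 :=
      orth_coord horth hj
    rw [← h0]
    congr 1
    funext i
    simp [hw, Matrix.mulVec_sub, Pi.sub_apply]
  have hwSp : ∀ j ∈ Sp, w j = - Ew j := by
    intro j hj
    have h1 := hEco j (hST (Finset.mem_union_right _ hj))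
    have h2 := hcSp j hj
    rw [h2] at h1
    linarith
  -- prev-error decomposition
  have hxoff : ∀ j, j ∉ Sp → w j = x j := by
    intro j hj
    have : xprev j = 0 := not_mem_supp (fun hm => hj (hprev hm))
    simp [hw, Pi.sub_apply, this]
  set D2 := SS (S \ Sp) x with hD2
  have hNw : N2 w = SS Sp w + D2 := by
    have hcompl : SS Sp w + SS Spᶜ w = N2 w := by
      unfold SS N2
      exact Finset.sum_add_sum_compl Sp _
    have h1 : SS Spᶜ w = SS Spᶜ x := by
      unfold SS
      apply Finset.sum_congr rfl
      intro j hj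
      rw [hxoff j (by simpa using hj)]
    have h2 : SS Spᶜ x = D2 := by
      rw [hD2]
      apply SS_eq_of_zero_off
      · intro j hj
        rw [Finset.mem_compl]
        exact (Finset.mem_sdiff.mp hj).2
      · intro j hj hj2
        by_contra hc
        exact hj2 (Finset.mem_sdiff.mpr ⟨mem_supp.mpr hc, by simpa using hj⟩)
    linarith [hcompl, h1, h2]
  have hSSw : SS Sp w = SS Sp Ew := by
    unfold SS
    apply Finset.sum_congr rfl
    intro j hj
    rw [hwSp j hj]
    ring
  have hD2n : 0 ≤ D2 := SS_nonneg _ _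
  have hNwD : (1 - δ ^ 2) * N2 w ≤ D2 := by
    have h1 : SS Sp Ew ≤ N2 Ew := SS_le_N2 _ _
    nlinarith [hNw, hSSw, hEw]
  -- identification
  set cv := A.transpose.mulVec (A.mulVec x - A.mulVec xprev) with hcvdef
  have hcv : cv = A.transpose.mulVec (A.mulVec w) := by
    rw [hcvdef, hw,
      show A.mulVec (x - xprev) = A.mulVec x - A.mulVec xprev from Matrix.mulVec_sub _ _ _]
  set Z := (S \ Sp) \ h with hZ
  set Φ := h \ (S \ Sp) with hΦ
  have hZΦcard : Z.card ≤ Φ.card := by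
    have e1 : ((S \ Sp) ∩ h).card + Z.card = (S \ Sp).card := by
      rw [hZ]; exact Finset.card_inter_add_card_sdiff _ _
    have e2 : (h ∩ (S \ Sp)).card + Φ.card = h.card := by
      rw [hΦ]; exact Finset.card_inter_add_card_sdiff _ _
    have e3 : ((S \ Sp) ∩ h).card = (h ∩ (S \ Sp)).card := by rw [Finset.inter_comm]
    have e4 : (S \ Sp).card ≤ S.card := Finset.card_le_card Finset.sdiff_subset
    omega
  have hZΦ : SS Z cv ≤ SS Φ cv := by
    apply pairing_sq hZΦcard
    intro j hj i hi
    have hjh : j ∉ h := (Finset.mem_sdiff.mp hj).2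
    have hih : i ∈ h := (Finset.mem_sdiff.mp hi).1
    have habs := hmax i hih j hjh
    have := pow_le_pow_left₀ (abs_nonneg _) habs 2
    rwa [sq_abs, sq_abs] at this
  have hcvSp : ∀ j ∈ Sp, cv j = 0 := by
    intro j hj
    rw [hcv]
    exact hcSp j hj
  have hcvΩ : ∀ j ∈ Ω, cv j = Ew j := by
    intro j hj
    have hjT : j ∈ T := Finset.mem_union_right _ hj
    have h1 : cv j = w j + Ew j := by rw [hcv]; exact hEco j hjT
    have hjS : j ∉ S := fun hc =>
      (Finset.mem_sdiff.mp hj).2 (Finset.mem_union_left _ hc)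
    have hjSp : j ∉ Sp := fun hc =>
      (Finset.mem_sdiff.mp hj).2 (Finset.mem_union_right _ hc)
    have : w j = x j := hxoff j hjSp
    rw [h1, this, not_mem_supp hjS]
    ring
  have hΦΩ : SS Φ cv ≤ SS Ω Ew := by
    have hsplit : SS (Φ ∩ Sp) cv + SS (Φ \ Sp) cv = SS Φ cv := by
      unfold SS
      exact Finset.sum_inter_add_sum_sdiff _ _ _
    have h1 : SS (Φ ∩ Sp) cv = 0 := by
      unfold SS
      apply Finset.sum_eq_zero
      intro j hj
      rw [hcvSp j (Finset.mem_inter.mp hj).2]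
      ring
    have h2 : Φ \ Sp ⊆ Ω := by
      intro j hj
      obtain ⟨hj1, hj2⟩ := Finset.mem_sdiff.mp hj
      obtain ⟨hjh, hjns⟩ := Finset.mem_sdiff.mp hj1
      refine Finset.mem_sdiff.mpr ⟨hjh, ?_⟩
      intro hc
      rcases Finset.mem_union.mp hc with hcS | hcSp
      · exact hjns (Finset.mem_sdiff.mpr ⟨hcS, by simpa using hj2⟩)
      · exact (by simpa using hj2 : j ∉ Sp) hcSp
    have h3 : SS (Φ \ Sp) cv = SS (Φ \ Sp) Ew := by
      unfold SS
      apply Finset.sum_congr rfl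
      intro j hj
      rw [hcvΩ j (h2 hj)]
    calc SS Φ cv = SS (Φ ∩ Sp) cv + SS (Φ \ Sp) cv := hsplit.symm
      _ = SS (Φ \ Sp) Ew := by rw [h1, h3]; ring
      _ ≤ SS Ω Ew := SS_mono h2 _
  -- on Z : x j = cv j - Ew j
  have hZco : ∀ j ∈ Z, x j = cv j - Ew j := by
    intro j hj
    obtain ⟨hj1, _⟩ := Finset.mem_sdiff.mp hj
    obtain ⟨hjS, hjSp⟩ := Finset.mem_sdiff.mp hj1
    have hjT : j ∈ T := hST (Finset.mem_union_left _ hjS)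
    have h1 : cv j = w j + Ew j := by rw [hcv]; exact hEco j hjT
    have h2 : w j = x j := hxoff j hjSp
    rw [h1, h2]
    ring
  have hZx : SS Z x ≤ 2 * SS Z cv + 2 * SS Z Ew := by
    unfold SS
    rw [Finset.mul_sum, Finset.mul_sum, ← Finset.sum_add_distrib]
    apply Finset.sum_le_sum
    intro j hj
    rw [hZco j hj]
    nlinarith [sq_nonneg (cv j + Ew j)]
  -- on P : x j = - Ew j
  set P := (S ∩ Sp) \ U with hP
  have hPco : ∀ j ∈ P, x j = - Ew j := by
    intro j hj
    obtain ⟨hj1, hjU⟩ := Finset.mem_sdiff.mp hj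
    obtain ⟨hjS, hjSp⟩ := Finset.mem_inter.mp hj1
    have hjpr : j ∉ supp xprev := fun hc => hjU (Finset.mem_union_left _ hc)
    have h1 : w j = x j := by
      have : xprev j = 0 := not_mem_supp hjpr
      simp [hw, Pi.sub_apply, this]
    have h2 := hwSp j hjSp
    rw [← h1, h2]
  have hSUsub : S \ U ⊆ Z ∪ P := by
    intro j hj
    obtain ⟨hjS, hjU⟩ := Finset.mem_sdiff.mp hj
    have hjh : j ∉ h := fun hc => hjU (Finset.mem_union_right _ hc)
    by_cases hjSp : j ∈ Sp
    · exact Finset.mem_union_right _ (Finset.mem_sdiff.mpr ⟨Finset.mem_inter.mpr ⟨hjS, hjSp⟩, hjU⟩)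
    · exact Finset.mem_union_left _
        (Finset.mem_sdiff.mpr ⟨Finset.mem_sdiff.mpr ⟨hjS, hjSp⟩, hjh⟩)
  have hZPdisj : Disjoint Z P := by
    rw [Finset.disjoint_left]
    intro j hjZ hjP
    exact (Finset.mem_sdiff.mp (Finset.mem_sdiff.mp hjZ).1).2
      (Finset.mem_inter.mp (Finset.mem_sdiff.mp hjP).1).2
  set z2 := SS (S \ U) x with hz2def
  have hz2 : z2 ≤ 2 * N2 Ew := by
    have h1 : z2 ≤ SS (Z ∪ P) x := SS_mono hSUsub x
    have h2 : SS (Z ∪ P) x = SS Z x + SS P x := by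
      unfold SS
      exact Finset.sum_union hZPdisj
    have h3 : SS P x = SS P Ew := by
      unfold SS
      apply Finset.sum_congr rfl
      intro j hj
      rw [hPco j hj]
      ring
    -- disjoint triple inside N2 Ew
    have hΩZP : Disjoint Ω (Z ∪ P) := by
      rw [Finset.disjoint_left]
      intro j hjΩ hjZP
      have hjS : j ∉ S := fun hc =>
        (Finset.mem_sdiff.mp hjΩ).2 (Finset.mem_union_left _ hc)
      rcases Finset.mem_union.mp hjZP with hc | hc
      · exact hjS (Finset.mem_sdiff.mp (Finset.mem_sdiff.mp hc).1).1
      · exact hjS (Finset.mem_inter.mp (Finset.mem_sdiff.mp hc).1).1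
    have h4 : SS Ω Ew + (SS Z Ew + SS P Ew) ≤ N2 Ew := by
      have e1 : SS Z Ew + SS P Ew = SS (Z ∪ P) Ew := by
        unfold SS
        exact (Finset.sum_union hZPdisj).symm
      have e2 : SS Ω Ew + SS (Z ∪ P) Ew = SS (Ω ∪ (Z ∪ P)) Ew := by
        unfold SS
        exact (Finset.sum_union hΩZP).symm
      rw [e1, e2]
      exact SS_le_N2 _ _
    have h5 : SS Z cv ≤ SS Ω Ew := le_trans hZΦ hΦΩ
    have h6 : 0 ≤ SS Ω Ew := SS_nonneg _ _
    have h7 : 0 ≤ SS P Ew := SS_nonneg _ _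
    have h8 : 0 ≤ SS Z Ew := SS_nonneg _ _
    nlinarith [hZx, h1, h2, h3]
  have hz2n : 0 ≤ z2 := SS_nonneg _ _
  have hz2D : (1 - δ ^ 2) * z2 ≤ 2 * δ ^ 2 * D2 := by
    have h1 : (1 - δ ^ 2) * z2 ≤ (1 - δ ^ 2) * (2 * δ ^ 2 * N2 w) := by
      have := le_trans hz2 (by nlinarith [hEw] : 2 * N2 Ew ≤ 2 * δ ^ 2 * N2 w)
      nlinarith
    nlinarith [hNwD, N2_nonneg w, sq_nonneg δ]
  -- least squares on U
  obtain ⟨hu1, hu2⟩ := hLSu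
  set e := x - u with he
  set T' := S ∪ U with hT'
  have hT'card : T'.card ≤ 3 * K := by
    have h1 : T'.card ≤ S.card + U.card := Finset.card_union_le _ _
    have h2 : U.card ≤ (supp xprev).card + h.card := Finset.card_union_le _ _
    have h3 : (supp xprev).card ≤ Sp.card := Finset.card_le_card hprev
    omega
  have hsuppe : supp e ⊆ T' := by
    intro j hj
    rw [mem_supp] at hj
    rw [hT', Finset.mem_union]
    by_contra hc
    push_neg at hc
    have hx0 : x j = 0 := not_mem_supp hc.1
    have hu0 : u j = 0 := not_mem_supp (fun hm => hc.2 (hu1 hm))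
    exact hj (by simp [he, Pi.sub_apply, hx0, hu0])
  set E'e := Ev A T' e with hE'def
  have hE' : N2 E'e ≤ δ ^ 2 * N2 e := N2_Ev_le hA hT'card hsuppe
  have horthU : ∀ j ∈ U, A.transpose.mulVec (A.mulVec e) j = 0 := by
    intro j hj
    have h0 : A.transpose.mulVec (fun i => A.mulVec x i - A.mulVec u i) j = 0 :=
      orth_coord hu2 hj
    rw [← h0]
    congr 1
    funext i
    simp [he, Matrix.mulVec_sub, Pi.sub_apply]
  have heU : ∀ j ∈ U, e j = - E'e j := by
    intro j hj
    have hjT' : j ∈ T' := Finset.mem_union_right _ hj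
    have h1 := Ev_coord (A := A) T' e hjT'
    have h2 := horthU j hj
    rw [h2] at h1
    linarith
  have hUe : SS U e = SS U E'e := by
    unfold SS
    apply Finset.sum_congr rfl
    intro j hj
    rw [heU j hj]
    ring
  have hNe : N2 e = SS U e + z2 := by
    have hcompl : SS U e + SS Uᶜ e = N2 e := by
      unfold SS N2
      exact Finset.sum_add_sum_compl U _
    have h1 : SS Uᶜ e = SS Uᶜ x := by
      unfold SS
      apply Finset.sum_congr rfl
      intro j hj
      have : u j = 0 := not_mem_supp (fun hm => (by simpa using hj : j ∉ U) (hu1 hm))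
      simp [he, Pi.sub_apply, this]
    have h2 : SS Uᶜ x = z2 := by
      rw [hz2def]
      apply SS_eq_of_zero_off
      · intro j hj
        rw [Finset.mem_compl]
        exact (Finset.mem_sdiff.mp hj).2
      · intro j hj hj2
        by_contra hc
        exact hj2 (Finset.mem_sdiff.mpr ⟨mem_supp.mpr hc, by simpa using hj⟩)
    linarith
  have hNez : (1 - δ ^ 2) * N2 e ≤ z2 := by
    have h1 : SS U E'e ≤ N2 E'e := SS_le_N2 _ _
    nlinarith [hNe, hUe, hE']
  have hUee : SS U e ≤ δ ^ 2 * N2 e := by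
    calc SS U e = SS U E'e := hUe
      _ ≤ N2 E'e := SS_le_N2 _ _
      _ ≤ δ ^ 2 * N2 e := hE'
  -- pruning
  set Z' := (S ∩ U) \ Sn with hZ'
  have hZ'card : Z'.card ≤ (Sn \ S).card := by
    have e1 : (S ∩ Sn).card + (S \ Sn).card = S.card := Finset.card_inter_add_card_sdiff _ _
    have e2 : (Sn ∩ S).card + (Sn \ S).card = Sn.card := Finset.card_inter_add_card_sdiff _ _
    have e5 : Z'.card = ((S ∩ U) \ Sn).card := by rw [hZ']
    have e3 : (S ∩ Sn).card = (Sn ∩ S).card := by rw [Finset.inter_comm]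
    have e4 : Z'.card ≤ (S \ Sn).card := by
      apply Finset.card_le_card
      intro j hj
      obtain ⟨hj1, hj2⟩ := Finset.mem_sdiff.mp hj
      exact Finset.mem_sdiff.mpr ⟨(Finset.mem_inter.mp hj1).1, hj2⟩
    omega
  have hZ'u : SS Z' u ≤ SS (Sn \ S) u := by
    apply pairing_sq hZ'card
    intro j hj i hi
    have hjSn : j ∉ Sn := (Finset.mem_sdiff.mp hj).2
    have hiSn : i ∈ Sn := (Finset.mem_sdiff.mp hi).1
    have habs := humax i hiSn j hjSn
    have := pow_le_pow_left₀ (abs_nonneg _) habs 2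
    rwa [sq_abs, sq_abs] at this
  have hSnSe : SS (Sn \ S) u = SS (Sn \ S) e := by
    unfold SS
    apply Finset.sum_congr rfl
    intro j hj
    have hjS : j ∉ S := (Finset.mem_sdiff.mp hj).2
    have : x j = 0 := not_mem_supp hjS
    simp [he, Pi.sub_apply, this]
  have hZ'x : SS Z' x ≤ 2 * SS (Sn \ S) e + 2 * SS Z' e := by
    have h1 : SS Z' x ≤ 2 * SS Z' u + 2 * SS Z' e := by
      unfold SS
      rw [Finset.mul_sum, Finset.mul_sum, ← Finset.sum_add_distrib]
      apply Finset.sum_le_sum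
      intro j hj
      have : x j = u j + e j := by simp [he, Pi.sub_apply]
      rw [this]
      nlinarith [sq_nonneg (u j - e j)]
    nlinarith [hZ'u, hSnSe, SS_nonneg Z' e]
  have hZ'Ue : SS (Sn \ S) e + SS Z' e ≤ SS U e := by
    have hdisj : Disjoint (Sn \ S) Z' := by
      rw [Finset.disjoint_left]
      intro j hj1 hj2
      exact (Finset.mem_sdiff.mp hj1).2 (Finset.mem_inter.mp (Finset.mem_sdiff.mp hj2).1).1
    have hsub : (Sn \ S) ∪ Z' ⊆ U := by
      intro j hj
      rcases Finset.mem_union.mp hj with hc | hc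
      · exact hSnsub (Finset.mem_sdiff.mp hc).1
      · exact (Finset.mem_inter.mp (Finset.mem_sdiff.mp hc).1).2
    calc SS (Sn \ S) e + SS Z' e = SS ((Sn \ S) ∪ Z') e := by
          unfold SS
          exact (Finset.sum_union hdisj).symm
      _ ≤ SS U e := SS_mono hsub _
  -- final assembly
  have hbsplit : SS (S \ Sn) x ≤ z2 + SS Z' x := by
    have hsub : S \ Sn ⊆ (S \ U) ∪ Z' := by
      intro j hj
      obtain ⟨hjS, hjSn⟩ := Finset.mem_sdiff.mp hj
      by_cases hjU : j ∈ U
      · exact Finset.mem_union_right _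
          (Finset.mem_sdiff.mpr ⟨Finset.mem_inter.mpr ⟨hjS, hjU⟩, hjSn⟩)
      · exact Finset.mem_union_left _ (Finset.mem_sdiff.mpr ⟨hjS, hjU⟩)
    have hdisj : Disjoint (S \ U) Z' := by
      rw [Finset.disjoint_left]
      intro j hj1 hj2
      exact (Finset.mem_sdiff.mp hj1).2 (Finset.mem_inter.mp (Finset.mem_sdiff.mp hj2).1).2
    calc SS (S \ Sn) x ≤ SS ((S \ U) ∪ Z') x := SS_mono hsub x
      _ = z2 + SS Z' x := by
          rw [hz2def]
          unfold SS
          exact Finset.sum_union hdisj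
  have hb2 : SS (S \ Sn) x ≤ z2 + 2 * δ ^ 2 * N2 e := by
    nlinarith [hbsplit, hZ'x, hZ'Ue, hUee, SS_nonneg (Sn \ S) e, SS_nonneg Z' e]
  -- combine : (1-δ²)² b2 ≤ 2δ²(1+δ²) D2
  have hfin : (1 - δ ^ 2) ^ 2 * SS (S \ Sn) x ≤ 2 * δ ^ 2 * (1 + δ ^ 2) * D2 := by
    nlinarith [hb2, hNez, hz2D, N2_nonneg e, sq_nonneg δ, hz2n, hd2, hD2n,
      SS_nonneg (S \ Sn) x]
  rw [div_mul_eq_mul_div, le_div_iff₀ (by positivity)]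
  linarith [hfin]

end SPcore

namespace SPcore
open SPaux

variable {m d : ℕ} {A : Matrix (Fin m) (Fin d) ℝ}

/-- if the support of `x` is inside the least-squares set, the solution is exact -/
lemma exact_recovery {L : ℕ} {x : Fin d → ℝ} {δ : ℝ} (hA : RIP A L δ)
    {V : Finset (Fin d)} (hV : V.card ≤ L) {v : Fin d → ℝ}
    (hLS : LeastSq A (A.mulVec x) V v) (hsupp : supp x ⊆ V) : v = x := by
  have hδ0 : 0 < δ := hA.1
  have hδ1 : δ < 1 := hA.2.1
  have hd2 : 0 < 1 - δ ^ 2 := by nlinarith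
  obtain ⟨hv1, hv2⟩ := hLS
  set e := x - v with he
  have hsuppe : supp e ⊆ V := by
    intro j hj
    rw [mem_supp] at hj
    by_contra hc
    have hx0 : x j = 0 := not_mem_supp (fun hm => hc (hsupp hm))
    have hv0 : v j = 0 := not_mem_supp (fun hm => hc (hv1 hm))
    exact hj (by simp [he, Pi.sub_apply, hx0, hv0])
  set Ee := Ev A V e with hEedef
  have hEe : N2 Ee ≤ δ ^ 2 * N2 e := N2_Ev_le hA hV hsuppe
  have horthV : ∀ j ∈ V, A.transpose.mulVec (A.mulVec e) j = 0 := by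
    intro j hj
    have h0 : A.transpose.mulVec (fun i => A.mulVec x i - A.mulVec v i) j = 0 :=
      orth_coord hv2 hj
    rw [← h0]
    congr 1
    funext i
    simp [he, Matrix.mulVec_sub, Pi.sub_apply]
  have heV : ∀ j ∈ V, e j = - Ee j := by
    intro j hj
    have h1 := Ev_coord (A := A) V e hj
    have h2 := horthV j hj
    rw [h2] at h1
    linarith
  have hNe : N2 e = SS V e := by
    have hcompl : SS V e + SS Vᶜ e = N2 e := by
      unfold SS N2
      exact Finset.sum_add_sum_compl V _
    have h1 : SS Vᶜ e = 0 := by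
      unfold SS
      apply Finset.sum_eq_zero
      intro j hj
      have : e j = 0 := not_mem_supp (fun hm => (by simpa using hj : j ∉ V) (hsuppe hm))
      rw [this]; ring
    linarith
  have hVe : SS V e = SS V Ee := by
    unfold SS
    apply Finset.sum_congr rfl
    intro j hj
    rw [heV j hj]; ring
  have hN0 : N2 e = 0 := by
    have h1 : SS V Ee ≤ N2 Ee := SS_le_N2 _ _
    have h2 : N2 e ≤ δ ^ 2 * N2 e := by
      calc N2 e = SS V e := hNe
        _ = SS V Ee := hVe
        _ ≤ N2 Ee := h1
        _ ≤ δ ^ 2 * N2 e := hEe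
    nlinarith [N2_nonneg e]
  have he0 : e = 0 := N2_eq_zero_iff.mp hN0
  funext j
  have : x j - v j = 0 := by
    have := congrFun he0 j
    simpa [he, Pi.sub_apply] using this
  linarith

end SPcore

namespace SPcount
open SPaux

/-- the iteration-counting lemma -/
lemma counting {ι : Type*} [DecidableEq ι] (g L : ℝ) (hg0 : 0 < g) (hg1 : g < 1)
    (hL : L = Real.log (1 / g)) :
    ∀ (N : ℕ) (S : Finset ι) (q : ι → ℝ) (B : ℕ → ℝ) (W : ℝ),
      S.card ≤ N →
      (∀ j ∈ S, 0 < q j) →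
      (∀ n, B (n + 1) ≤ g * B n) →
      (∀ n, ∃ R, R ⊆ S ∧ B n = ∑ j ∈ R, q j) →
      B 0 ≤ W →
      (∀ hS : S.Nonempty, g * S.sup' hS q ≤ W) →
      ∃ n : ℕ, B n ≤ 0 ∧ (n : ℝ) * L ≤
        max 0 ((S.card : ℝ) * (L + Real.log 2)
          + Real.log (min W (∑ j ∈ S, q j)) - Real.log (∑ j ∈ S, q j)) := by
  have hLpos : 0 < L := by
    rw [hL]
    apply Real.log_pos
    rw [one_div]
    exact (one_lt_inv₀ hg0).mpr hg1
  have hlogg : Real.log g = - L := by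
    rw [hL, one_div, Real.log_inv]
    ring
  intro N
  induction N with
  | zero =>
    intro S q B W hcard hq hrec hstruct hBW hinv
    have hSe : S = ∅ := Finset.card_eq_zero.mp (Nat.le_zero.mp hcard)
    obtain ⟨R, hR, hB⟩ := hstruct 0
    rw [hSe] at hR
    have : R = ∅ := Finset.subset_empty.mp hR
    refine ⟨0, by rw [hB, this]; simp, ?_⟩
    simp only [Nat.cast_zero, zero_mul]
    exact le_max_left 0 _
  | succ N0 IH =>
    intro S q B W hcard hq hrec hstruct hBW hinv
    rcases S.eq_empty_or_nonempty with rfl | hS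
    · obtain ⟨R, hR, hB⟩ := hstruct 0
      have : R = ∅ := Finset.subset_empty.mp hR
      refine ⟨0, by rw [hB, this]; simp, ?_⟩
      simp only [Nat.cast_zero, zero_mul]
      exact le_max_left 0 _
    have hBn_nonneg : ∀ n, 0 ≤ B n := by
      intro n
      obtain ⟨R, hR, hB⟩ := hstruct n
      rw [hB]
      exact Finset.sum_nonneg (fun j hj => (hq j (hR hj)).le)
    rcases le_or_gt (B 0) 0 with hB00 | hB0pos
    · exact ⟨0, hB00, by simp only [Nat.cast_zero, zero_mul]; exact le_max_left 0 _⟩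
    have hWpos : 0 < W := lt_of_lt_of_le hB0pos hBW
    -- basic quantities
    set Q := ∑ j ∈ S, q j with hQ
    have hQpos : 0 < Q := Finset.sum_pos hq hS
    obtain ⟨j0, hj0S, hj0⟩ := Finset.exists_mem_eq_sup' hS q
    set u := q j0 with hu
    have humax : ∀ j ∈ S, q j ≤ u := by
      intro j hj
      rw [← hj0]
      exact Finset.le_sup' q hj
    have hupos : 0 < u := hq j0 hj0S
    have hinvu : g * u ≤ W := by
      have h0 := hinv hS
      rw [hj0] at h0
      exact h0
    have huQ : u ≤ Q := by
      rw [hQ]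
      exact Finset.single_le_sum (fun j hj => (hq j hj).le) hj0S
    have hBQ : B 0 ≤ Q := by
      obtain ⟨R, hR, hB⟩ := hstruct 0
      rw [hB, hQ]
      exact Finset.sum_le_sum_of_subset_of_nonneg hR (fun j hj _ => (hq j hj).le)
    have hminWQ : min W Q = min W Q := rfl
    set V : ℝ := min W Q with hV
    have hVpos : 0 < V := lt_min hWpos hQpos
    have hVW : V ≤ W := min_le_left _ _
    have hVQ : V ≤ Q := min_le_right _ _
    have hBV : B 0 ≤ V := le_min hBW hBQ
    have hstep1 : ∀ n, B (n + 1) ≤ B n := fun n =>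
      le_trans (hrec n) (by nlinarith [hBn_nonneg n])
    have hBmono : ∀ a b : ℕ, a ≤ b → B b ≤ B a := by
      intro a b hab
      induction b with
      | zero =>
        have : a = 0 := Nat.le_zero.mp hab
        rw [this]
      | succ b ih =>
        rcases Nat.lt_or_ge a (b + 1) with hlt | hge
        · exact le_trans (hstep1 b) (ih (Nat.lt_succ_iff.mp hlt))
        · have : a = b + 1 := le_antisymm hab hge
          rw [this]
    have hBpow : ∀ k, B k ≤ g ^ k * B 0 := by
      intro k
      induction k with
      | zero => simp
      | succ k ih =>
        calc B (k + 1) ≤ g * B k := hrec k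
          _ ≤ g * (g ^ k * B 0) := by nlinarith [ih]
          _ = g ^ (k + 1) * B 0 := by ring
    -- the working sub-multiset
    set S' := S.filter (fun j => q j < u) with hS'
    have hS'sub : S' ⊆ S := Finset.filter_subset _ _
    have hj0not : j0 ∉ S' := by
      rw [hS']
      intro hc
      exact lt_irrefl u (Finset.mem_filter.mp hc).2
    set Q' := ∑ j ∈ S', q j with hQ'
    have hQ'nonneg : 0 ≤ Q' := Finset.sum_nonneg (fun j hj => (hq j (hS'sub hj)).le)
    have hQ'Q : Q' ≤ Q :=
      Finset.sum_le_sum_of_subset_of_nonneg hS'sub (fun j hj _ => (hq j hj).le)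
    obtain ⟨mc, hmc⟩ : ∃ mcv : ℕ, (S \ S').card = mcv := ⟨_, rfl⟩
    have hconst : ∀ j ∈ S \ S', q j = u := by
      intro j hj
      obtain ⟨hjS, hjn⟩ := Finset.mem_sdiff.mp hj
      have h1 : ¬ q j < u := fun hc => hjn (Finset.mem_filter.mpr ⟨hjS, hc⟩)
      exact le_antisymm (humax j hjS) (not_lt.mp h1)
    have hQsplit : Q = (mc : ℝ) * u + Q' := by
      have h1 : ∑ j ∈ S \ S', q j + ∑ j ∈ S', q j = ∑ j ∈ S, q j :=
        Finset.sum_sdiff hS'sub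
      have h2 : ∑ j ∈ S \ S', q j = (mc : ℝ) * u := by
        rw [Finset.sum_congr rfl hconst, Finset.sum_const, nsmul_eq_mul, hmc]
      rw [hQ, ← h1, h2, hQ']
    have hmc1 : 1 ≤ mc := by
      rw [← hmc]
      refine Finset.card_pos.mpr ⟨j0, Finset.mem_sdiff.mpr ⟨hj0S, hj0not⟩⟩
    have hcardsum : mc + S'.card = S.card := by
      rw [← hmc]
      exact Finset.card_sdiff_add_card_eq_card hS'sub
    have hS'card : S'.card ≤ N0 := by omega
    have hmc2 : ((mc : ℝ) + 1) ≤ 2 ^ mc := by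
      have h1 : mc + 1 ≤ 2 ^ mc := Nat.succ_le_of_lt (Nat.lt_two_pow_self (n := mc))
      calc ((mc : ℝ) + 1) = ((mc + 1 : ℕ) : ℝ) := by push_cast; ring
        _ ≤ ((2 ^ mc : ℕ) : ℝ) := Nat.cast_le.mpr h1
        _ = 2 ^ mc := by push_cast; ring
    have hgpow1 : ∀ t : ℕ, g ^ t ≤ 1 := fun t => pow_le_one₀ hg0.le hg1.le
    -- helper for logs
    have hlogp : ∀ a b c : ℝ, 0 < a → 0 < b → 0 < c → a ≤ b * c →
        Real.log a ≤ Real.log b + Real.log c := by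
      intro a b c ha hb hc habc
      rw [← Real.log_mul hb.ne' hc.ne']
      exact Real.log_le_log ha habc
    have hlog2pos : (0:ℝ) < Real.log 2 := Real.log_pos (by norm_num)
    have hcardlog : Real.log Q ≤ Real.log u + (S.card : ℝ) * Real.log 2 := by
      have h1 : Q ≤ (S.card : ℝ) * u := by
        have := Finset.sum_le_card_nsmul S q u humax
        rw [nsmul_eq_mul] at this
        exact this
      have h2 : (S.card : ℝ) ≤ 2 ^ S.card := by
        have := Nat.lt_two_pow_self (n := S.card)
        calc (S.card : ℝ) ≤ ((2 ^ S.card : ℕ) : ℝ) := Nat.cast_le.mpr this.le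
          _ = 2 ^ S.card := by push_cast; ring
      have hcardpos : (0:ℝ) < S.card := by
        have := Finset.card_pos.mpr hS
        exact_mod_cast this
      have h3 := hlogp Q (2 ^ S.card) u hQpos (by positivity) hupos
        (le_trans h1 (by nlinarith))
      rw [Real.log_pow] at h3
      linarith
    -- main case split
    rcases le_or_gt u V with hVu | hVu
    · -- at least one contraction step needed
      have hex : ∃ t : ℕ, g ^ t * V < u := by
        obtain ⟨t, ht⟩ := exists_pow_lt_of_lt_one (show (0:ℝ) < u / V by positivity) hg1
        exact ⟨t, (lt_div_iff₀ hVpos).mp ht⟩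
      obtain ⟨k, hkP, hkmin⟩ : ∃ k, g ^ k * V < u ∧ ∀ t, t < k → ¬ (g ^ t * V < u) :=
        ⟨Nat.find hex, Nat.find_spec hex, fun t ht => Nat.find_min hex ht⟩
      have hk1 : 1 ≤ k := by
        rcases Nat.eq_zero_or_pos k with h0 | h0
        · rw [h0] at hkP
          simp at hkP
          linarith
        · exact h0
      have hkprev : u ≤ g ^ (k - 1) * V := by
        have h1 := hkmin (k - 1) (by omega)
        exact le_of_not_gt h1
      have hklog : ((k : ℝ) - 1) * L ≤ Real.log V - Real.log u := by
        have h1 : Real.log u ≤ Real.log (g ^ (k - 1) * V) := Real.log_le_log hupos hkprev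
        rw [Real.log_mul (by positivity) hVpos.ne', Real.log_pow, hlogg] at h1
        have hcast : ((k - 1 : ℕ) : ℝ) = (k : ℝ) - 1 := by
          have h9 : (1:ℕ) ≤ k := hk1
          push_cast [Nat.cast_sub h9]
          ring
        rw [hcast] at h1
        nlinarith
      set W' := g ^ k * V with hW'
      have hW'pos : 0 < W' := by positivity
      have hBk : B k ≤ W' := by
        calc B k ≤ g ^ k * B 0 := hBpow k
          _ ≤ g ^ k * V := by nlinarith [pow_pos hg0 k]
      have hstruct' : ∀ t, ∃ R, R ⊆ S' ∧ B (k + t) = ∑ j ∈ R, q j := by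
        intro t
        obtain ⟨R, hR, hB⟩ := hstruct (k + t)
        refine ⟨R, ?_, hB⟩
        intro j hj
        have hqB : q j ≤ B (k + t) := by
          rw [hB]
          exact Finset.single_le_sum (fun i hi => (hq i (hR hi)).le) hj
        refine Finset.mem_filter.mpr ⟨hR hj, ?_⟩
        calc q j ≤ B (k + t) := hqB
          _ ≤ B k := hBmono k (k + t) (Nat.le_add_right _ _)
          _ ≤ W' := hBk
          _ < u := hkP
      have hinv' : ∀ hS'' : S'.Nonempty, g * S'.sup' hS'' q ≤ W' := by
        intro hS''
        obtain ⟨j1, hj1S, hj1⟩ := Finset.exists_mem_eq_sup' hS'' q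
        rw [hj1]
        have hj1lt : q j1 < u := (Finset.mem_filter.mp hj1S).2
        have h2 : g * u ≤ g * (g ^ (k - 1) * V) := by nlinarith [hkprev]
        have h3 : g * (g ^ (k - 1) * V) = g ^ k * V := by
          rw [← mul_assoc, ← pow_succ']
          congr 2
          omega
        have h4 : g * q j1 ≤ g * u := by nlinarith
        rw [hW']
        linarith
      obtain ⟨n', hn'0, hn'L⟩ := IH S' q (fun t => B (k + t)) W' hS'card
        (fun j hj => hq j (hS'sub hj))
        (fun t => by rw [Nat.add_succ]; exact hrec (k + t))
        hstruct' (by simpa using hBk) hinv'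
      refine ⟨k + n', by simpa using hn'0, ?_⟩
      -- budget bookkeeping
      have hkL : (k : ℝ) * L ≤ L + Real.log V - Real.log u := by nlinarith [hklog]
      set Pot' := (S'.card : ℝ) * (L + Real.log 2)
        + Real.log (min W' (∑ j ∈ S', q j)) - Real.log (∑ j ∈ S', q j) with hPot'
      have htarget : (k : ℝ) * L + (n' : ℝ) * L ≤
          max 0 ((S.card : ℝ) * (L + Real.log 2) + Real.log (min W Q) - Real.log Q) := by
        rcases le_or_gt Pot' 0 with hP0 | hP0
        · have h1 : (n' : ℝ) * L ≤ 0 := by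
            have := hn'L
            rw [max_eq_left hP0] at this
            exact this
          have h2 : L + Real.log V - Real.log u ≤
              (S.card : ℝ) * (L + Real.log 2) + Real.log V - Real.log Q := by
            have hc1 : (1 : ℝ) ≤ S.card := by
              have := Finset.card_pos.mpr hS
              exact_mod_cast this
            nlinarith [hcardlog, hlog2pos, hLpos]
          have h3 : (k : ℝ) * L + (n' : ℝ) * L ≤
              (S.card : ℝ) * (L + Real.log 2) + Real.log V - Real.log Q := by linarith
          calc (k : ℝ) * L + (n' : ℝ) * L
              ≤ (S.card : ℝ) * (L + Real.log 2) + Real.log (min W Q) - Real.log Q := by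
                rw [← hV]; linarith
            _ ≤ max 0 _ := le_max_right _ _
        · have hn'L2 : (n' : ℝ) * L ≤ Pot' := by
            have := hn'L
            rw [max_eq_right hP0.le] at this
            exact this
          have hS'ne : S'.Nonempty := by
            by_contra hc
            rw [Finset.not_nonempty_iff_eq_empty] at hc
            rw [hPot', hc] at hP0
            simp [min_eq_right hW'pos.le] at hP0
          have hQ'pos : 0 < Q' := Finset.sum_pos (fun j hj => hq j (hS'sub hj)) hS'ne
          have hminpos : 0 < min W' Q' := lt_min hW'pos hQ'pos
          -- key product inequality
          have hprod : min W' Q' * Q ≤ 2 ^ mc * (u * Q') := by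
            have h1 : min W' Q' ≤ Q' := min_le_right _ _
            have h2 : min W' Q' ≤ W' := min_le_left _ _
            have h3 : min W' Q' ≤ u := le_trans h2 hkP.le
            have e1 : min W' Q' * Q = (mc : ℝ) * u * (min W' Q') + Q' * (min W' Q') := by
              rw [hQsplit]; ring
            have e2 : (mc : ℝ) * u * (min W' Q') ≤ (mc : ℝ) * u * Q' :=
              mul_le_mul_of_nonneg_left h1 (by positivity)
            have e3 : Q' * (min W' Q') ≤ Q' * u :=
              mul_le_mul_of_nonneg_left h3 hQ'nonneg
            have e4 : (mc : ℝ) * u * Q' + Q' * u = ((mc : ℝ) + 1) * (u * Q') := by ring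
            have e5 : ((mc : ℝ) + 1) * (u * Q') ≤ 2 ^ mc * (u * Q') :=
              mul_le_mul_of_nonneg_right hmc2 (by positivity)
            linarith
          have hlogprod : Real.log (min W' Q') + Real.log Q ≤
              (mc : ℝ) * Real.log 2 + Real.log u + Real.log Q' := by
            have h1 : Real.log (min W' Q' * Q) ≤ Real.log (2 ^ mc * (u * Q')) :=
              Real.log_le_log (by positivity) hprod
            rw [Real.log_mul hminpos.ne' hQpos.ne',
              Real.log_mul (by positivity) (by positivity),
              Real.log_mul hupos.ne' hQ'pos.ne', Real.log_pow] at h1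
            linarith
          have hcards : (S.card : ℝ) = (mc : ℝ) + (S'.card : ℝ) := by
            exact_mod_cast (hcardsum.symm : S.card = mc + S'.card)
          have hmcL : (1:ℝ) ≤ (mc : ℝ) := by exact_mod_cast hmc1
          have hLmc : L ≤ (mc : ℝ) * L := le_mul_of_one_le_left hLpos.le hmcL
          have hcards' : (S.card : ℝ) * (L + Real.log 2)
              = (mc : ℝ) * (L + Real.log 2) + (S'.card : ℝ) * (L + Real.log 2) := by
            rw [hcards]; ring
          have h2 : (k : ℝ) * L + (n' : ℝ) * L ≤
              (S.card : ℝ) * (L + Real.log 2) + Real.log V - Real.log Q := by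
            rw [hPot'] at hn'L2
            rw [← hQ'] at hn'L2
            linarith [hkL, hn'L2, hlogprod, hLmc, hcards']
          calc (k : ℝ) * L + (n' : ℝ) * L
              ≤ (S.card : ℝ) * (L + Real.log 2) + Real.log (min W Q) - Real.log Q := by
                rw [← hV]; linarith
            _ ≤ max 0 _ := le_max_right _ _
      calc ((k + n' : ℕ) : ℝ) * L = (k : ℝ) * L + (n' : ℝ) * L := by push_cast; ring
        _ ≤ _ := htarget
    · -- skip branch : the largest remaining value is already below the bound
      have hstruct'' : ∀ t, ∃ R, R ⊆ S' ∧ B t = ∑ j ∈ R, q j := by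
        intro t
        obtain ⟨R, hR, hB⟩ := hstruct t
        refine ⟨R, ?_, hB⟩
        intro j hj
        have hqB : q j ≤ B t := by
          rw [hB]
          exact Finset.single_le_sum (fun i hi => (hq i (hR hi)).le) hj
        refine Finset.mem_filter.mpr ⟨hR hj, ?_⟩
        calc q j ≤ B t := hqB
          _ ≤ B 0 := hBmono 0 t (Nat.zero_le _)
          _ ≤ V := hBV
          _ < u := hVu
      have hinv'' : ∀ hS'' : S'.Nonempty, g * S'.sup' hS'' q ≤ W := by
        intro hS''
        obtain ⟨j1, hj1S, hj1⟩ := Finset.exists_mem_eq_sup' hS'' q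
        rw [hj1]
        have hj1lt : q j1 < u := by
          have h9 : j1 ∈ S.filter (fun j => q j < u) := by rw [← hS']; exact hj1S
          exact (Finset.mem_filter.mp h9).2
        have h10 : g * q j1 ≤ g * u := mul_le_mul_of_nonneg_left hj1lt.le hg0.le
        linarith [hinvu]
      obtain ⟨n', hn'0, hn'L⟩ := IH S' q B W hS'card
        (fun j hj => hq j (hS'sub hj)) hrec hstruct'' hBW hinv''
      refine ⟨n', hn'0, ?_⟩
      set Pot'' := (S'.card : ℝ) * (L + Real.log 2)
        + Real.log (min W (∑ j ∈ S', q j)) - Real.log (∑ j ∈ S', q j) with hPot''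
      rcases le_or_gt Pot'' 0 with hP0 | hP0
      · have h1 : (n' : ℝ) * L ≤ 0 := by
          have := hn'L
          rw [max_eq_left hP0] at this
          exact this
        exact le_trans h1 (le_max_left _ _)
      · have hn'L2 : (n' : ℝ) * L ≤ Pot'' := by
          have := hn'L
          rw [max_eq_right hP0.le] at this
          exact this
        have hS'ne : S'.Nonempty := by
          by_contra hc
          rw [Finset.not_nonempty_iff_eq_empty] at hc
          rw [hPot'', hc] at hP0
          simp [min_eq_right hWpos.le] at hP0
        have hQ'pos : 0 < Q' := Finset.sum_pos (fun j hj => hq j (hS'sub hj)) hS'ne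
        have hcards : (S.card : ℝ) = (mc : ℝ) + (S'.card : ℝ) := by
          exact_mod_cast (hcardsum.symm : S.card = mc + S'.card)
        have hmcL : (1:ℝ) ≤ (mc : ℝ) := by exact_mod_cast hmc1
        have hugW : (mc : ℝ) * u * g ≤ (mc : ℝ) * W := by
          have h9 : (mc : ℝ) * (g * u) ≤ (mc : ℝ) * W :=
            mul_le_mul_of_nonneg_left hinvu (by positivity)
          calc (mc : ℝ) * u * g = (mc : ℝ) * (g * u) := by ring
            _ ≤ (mc : ℝ) * W := h9
        -- show Pot'' ≤ Pot
        have hPleP : Pot'' ≤ (S.card : ℝ) * (L + Real.log 2)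
            + Real.log (min W Q) - Real.log Q := by
          rw [hPot'', ← hQ']
          have hgmc : g ^ mc ≤ g := by
            have h9 : g ^ mc = g ^ (mc - 1) * g := by
              rw [← pow_succ]
              congr 1
              omega
            have h10 : g ^ (mc - 1) * g ≤ 1 * g :=
              mul_le_mul_of_nonneg_right (hgpow1 (mc - 1)) hg0.le
            rw [h9]
            linarith [h10]
          rcases le_or_gt Q W with hQW | hWQ
          · have e1 : min W Q = Q := min_eq_right hQW
            have e2 : min W Q' = Q' := min_eq_right (le_trans hQ'Q hQW)
            rw [e1, e2]
            have hcards' : (S.card : ℝ) * (L + Real.log 2)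
                = (mc : ℝ) * (L + Real.log 2) + (S'.card : ℝ) * (L + Real.log 2) := by
              rw [hcards]; ring
            have h9 : (0:ℝ) ≤ (mc : ℝ) * (L + Real.log 2) :=
              mul_nonneg (by positivity) (by linarith)
            linarith
          · have e1 : min W Q = W := min_eq_left hWQ.le
            rw [e1]
            rcases le_or_gt Q' W with hQ'W | hWQ'
            · have e2 : min W Q' = Q' := min_eq_right hQ'W
              rw [e2]
              -- need : log Q ≤ mc (L + log2) + log W
              have hprod : Q * g ^ mc ≤ W * 2 ^ mc := by
                have h2 : (mc : ℝ) * u ≤ (mc : ℝ) * (W / g) := by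
                  rw [mul_div_assoc', le_div_iff₀ hg0]
                  exact hugW
                have h1 : Q ≤ (mc : ℝ) * (W / g) + W := by
                  linarith [hQsplit, h2, hQ'W]
                have h3 : Q * g ^ mc ≤ ((mc : ℝ) * (W / g) + W) * g ^ mc :=
                  mul_le_mul_of_nonneg_right h1 (pow_pos hg0 mc).le
                have h5 : g ^ mc / g = g ^ (mc - 1) := by
                  rw [eq_comm, eq_div_iff hg0.ne', ← pow_succ]
                  congr 1
                  omega
                have h4 : ((mc : ℝ) * (W / g) + W) * g ^ mc
                    = (mc : ℝ) * W * (g ^ mc / g) + W * g ^ mc := by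
                  field_simp
                have h6 : (mc : ℝ) * W * (g ^ mc / g) ≤ (mc : ℝ) * W * 1 := by
                  rw [h5]
                  exact mul_le_mul_of_nonneg_left (hgpow1 (mc - 1)) (by positivity)
                have h7 : W * g ^ mc ≤ W * 1 :=
                  mul_le_mul_of_nonneg_left (hgpow1 mc) hWpos.le
                have h8 : ((mc : ℝ) + 1) * W ≤ 2 ^ mc * W :=
                  mul_le_mul_of_nonneg_right hmc2 hWpos.le
                rw [mul_one] at h6 h7
                have h9 : ((mc : ℝ) + 1) * W = (mc : ℝ) * W + W := by ring
                linarith only [h3, h4, h6, h7, h8, h9]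
              have hlogp2 : Real.log Q + (mc : ℝ) * Real.log g ≤
                  Real.log W + (mc : ℝ) * Real.log 2 := by
                have h1 : Real.log (Q * g ^ mc) ≤ Real.log (W * 2 ^ mc) :=
                  Real.log_le_log (by positivity) hprod
                rw [Real.log_mul hQpos.ne' (by positivity),
                  Real.log_mul hWpos.ne' (by positivity),
                  Real.log_pow, Real.log_pow] at h1
                linarith
              rw [hlogg] at hlogp2
              have hcards' : (S.card : ℝ) * (L + Real.log 2)
                  = (mc : ℝ) * (L + Real.log 2) + (S'.card : ℝ) * (L + Real.log 2) := by
                rw [hcards]; ring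
              linarith
            · have e2 : min W Q' = W := min_eq_left hWQ'.le
              rw [e2]
              -- need : log Q ≤ mc (L + log2) + log Q'
              have hprod : Q * g ^ mc ≤ Q' * 2 ^ mc := by
                have h2 : (mc : ℝ) * u ≤ (mc : ℝ) * (Q' / g) := by
                  rw [mul_div_assoc', le_div_iff₀ hg0]
                  have h9 : (mc : ℝ) * W ≤ (mc : ℝ) * Q' :=
                    mul_le_mul_of_nonneg_left hWQ'.le (by positivity)
                  linarith [hugW, h9]
                have h1 : Q ≤ (mc : ℝ) * (Q' / g) + Q' := by
                  linarith [hQsplit, h2]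
                have h3 : Q * g ^ mc ≤ ((mc : ℝ) * (Q' / g) + Q') * g ^ mc :=
                  mul_le_mul_of_nonneg_right h1 (pow_pos hg0 mc).le
                have h5 : g ^ mc / g = g ^ (mc - 1) := by
                  rw [eq_comm, eq_div_iff hg0.ne', ← pow_succ]
                  congr 1
                  omega
                have h4 : ((mc : ℝ) * (Q' / g) + Q') * g ^ mc
                    = (mc : ℝ) * Q' * (g ^ mc / g) + Q' * g ^ mc := by
                  field_simp
                have h6 : (mc : ℝ) * Q' * (g ^ mc / g) ≤ (mc : ℝ) * Q' * 1 := by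
                  rw [h5]
                  exact mul_le_mul_of_nonneg_left (hgpow1 (mc - 1)) (by positivity)
                have h7 : Q' * g ^ mc ≤ Q' * 1 :=
                  mul_le_mul_of_nonneg_left (hgpow1 mc) hQ'pos.le
                have h8 : ((mc : ℝ) + 1) * Q' ≤ 2 ^ mc * Q' :=
                  mul_le_mul_of_nonneg_right hmc2 hQ'pos.le
                rw [mul_one] at h6 h7
                have h9 : ((mc : ℝ) + 1) * Q' = (mc : ℝ) * Q' + Q' := by ring
                linarith only [h3, h4, h6, h7, h8, h9]
              have hlogp2 : Real.log Q + (mc : ℝ) * Real.log g ≤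
                  Real.log Q' + (mc : ℝ) * Real.log 2 := by
                have h1 : Real.log (Q * g ^ mc) ≤ Real.log (Q' * 2 ^ mc) :=
                  Real.log_le_log (by positivity) hprod
                rw [Real.log_mul hQpos.ne' (by positivity),
                  Real.log_mul hQ'pos.ne' (by positivity),
                  Real.log_pow, Real.log_pow] at h1
                linarith
              rw [hlogg] at hlogp2
              have hcards' : (S.card : ℝ) * (L + Real.log 2)
                  = (mc : ℝ) * (L + Real.log 2) + (S'.card : ℝ) * (L + Real.log 2) := by
                rw [hcards]; ring
              linarith
        calc (n' : ℝ) * L ≤ Pot'' := hn'L2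
          _ ≤ (S.card : ℝ) * (L + Real.log 2) + Real.log (min W Q) - Real.log Q := hPleP
          _ ≤ max 0 _ := le_max_right _ _

end SPcount

/-- Theorem 2: with noiseless measurements `y = A x_S`, Subspace Pursuit
recovers `x_S` exactly in `⌈cK⌉` iterations, where `c = ln(4/ρ_{3K}²)/ln(1/ρ_{3K}²)`. -/
theorem sp_convergence
    {m d K : ℕ} (hK : 0 < K)
    (A : Matrix (Fin m) (Fin d) ℝ) (xS : Fin d → ℝ)
    (δ3 ρ3 c : ℝ)
    (hxS : (supp xS).card ≤ K)
    (hRIP3 : RIP A (3 * K) δ3)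
    (hρ3 : ρ3 = Real.sqrt (2 * δ3 ^ 2 * (1 + δ3 ^ 2)) / (1 - δ3 ^ 2))
    (hρ3lt : ρ3 < 1)
    (hc : c = Real.log (4 / ρ3 ^ 2) / Real.log (1 / ρ3 ^ 2))
    (X : ℕ → Fin d → ℝ) (hX0 : X 0 = 0)
    (hsteps : ∀ i : ℕ, SPStep K A (A.mulVec xS) (X i) (X (i + 1))) :
    X ⌈c * K⌉₊ = xS := by
  classical
  open SPaux SPcore in
  have hδ0 : 0 < δ3 := hRIP3.1
  have hδ1 : δ3 < 1 := hRIP3.2.1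
  have hd2 : 0 < 1 - δ3 ^ 2 := by nlinarith
  have hρpos : 0 < ρ3 := by
    rw [hρ3]
    apply div_pos
    · apply Real.sqrt_pos.mpr
      nlinarith
    · exact hd2
  set g := ρ3 ^ 2 with hg
  have hg0 : 0 < g := by positivity
  have hg1 : g < 1 := by rw [hg]; nlinarith
  have hgval : g = 2 * δ3 ^ 2 * (1 + δ3 ^ 2) / (1 - δ3 ^ 2) ^ 2 := by
    rw [hg, hρ3, div_pow, Real.sq_sqrt (by positivity)]
  set L := Real.log (1 / g) with hL
  have hLpos : 0 < L := by
    rw [hL]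
    apply Real.log_pos
    rw [one_div]
    exact (one_lt_inv₀ hg0).mpr hg1
  have hlogg : Real.log g = - L := by
    rw [hL, one_div, Real.log_inv]
    ring
  -- extract the SP step data
  have hsteps' : ∀ i : ℕ, ∃ (h Snext : Finset (Fin d)) (u : Fin d → ℝ),
      h.card = K ∧
      (∀ i' ∈ h, ∀ j ∉ h,
        |A.transpose.mulVec (A.mulVec xS - A.mulVec (X i)) j| ≤
          |A.transpose.mulVec (A.mulVec xS - A.mulVec (X i)) i'|) ∧
      LeastSq A (A.mulVec xS) (supp (X i) ∪ h) u ∧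
      Snext ⊆ supp (X i) ∪ h ∧ Snext.card = K ∧
      (∀ i' ∈ Snext, ∀ j ∉ Snext, |u j| ≤ |u i'|) ∧
      LeastSq A (A.mulVec xS) Snext (X (i + 1)) := hsteps
  choose hF SnF uF hprop using hsteps'
  set S := supp xS with hSdef
  -- the error sequence
  set SnSeq : ℕ → Finset (Fin d) := fun n => Nat.rec ∅ (fun i _ => SnF i) n with hSnSeq
  have hSn0 : SnSeq 0 = ∅ := rfl
  have hSnsucc : ∀ i, SnSeq (i + 1) = SnF i := fun i => rfl
  set B : ℕ → ℝ := fun n => SS (S \ SnSeq n) xS with hB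
  have hBnonneg : ∀ n, 0 ≤ B n := fun n => SS_nonneg _ _
  -- the per-iteration contraction
  have hstepB : ∀ n, B (n + 1) ≤ g * B n := by
    intro n
    rw [hgval]
    cases n with
    | zero =>
      obtain ⟨hcard, hmax, hLSu, hSnsub, hSncard, humax, hLSx⟩ := hprop 0
      have horth0 : ∀ z : Fin d → ℝ, supp z ⊆ (∅ : Finset (Fin d)) →
          ∑ i, (A.mulVec xS i - A.mulVec (X 0) i) * A.mulVec z i = 0 := by
        intro z hz
        have hz0 : z = 0 := by
          funext j
          by_contra hc
          exact absurd (hz (mem_supp.mpr hc)) (Finset.notMem_empty j)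
        rw [hz0]
        simp [Matrix.mulVec_zero]
      have := main_step (A := A) hRIP3 hxS (Sp := (∅ : Finset (Fin d)))
        (xprev := X 0) (by simp) (by rw [hX0, supp_zero]) horth0
        hcard hmax hLSu hSnsub hSncard humax
      show SS (S \ SnSeq (0 + 1)) xS ≤ _ * SS (S \ SnSeq 0) xS
      rw [hSnsucc, hSn0]
      simpa using this
    | succ i =>
      obtain ⟨hcard, hmax, hLSu, hSnsub, hSncard, humax, hLSx⟩ := hprop (i + 1)
      obtain ⟨-, -, -, -, hSncard', -, hLSxp⟩ := hprop i
      have horthp : ∀ z : Fin d → ℝ, supp z ⊆ SnF i →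
          ∑ i', (A.mulVec xS i' - A.mulVec (X (i + 1)) i') * A.mulVec z i' = 0 := by
        intro z hz
        exact hLSxp.2 z hz
      have := main_step (A := A) hRIP3 hxS (Sp := SnF i)
        (xprev := X (i + 1)) (le_of_eq hSncard') hLSxp.1 horthp
        hcard hmax hLSu hSnsub hSncard humax
      simpa using this
  -- structure of the error sequence
  have hBstruct : ∀ n, ∃ R, R ⊆ S ∧ B n = ∑ j ∈ R, xS j ^ 2 :=
    fun n => ⟨S \ SnSeq n, Finset.sdiff_subset, rfl⟩
  have hq : ∀ j ∈ S, 0 < xS j ^ 2 := by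
    intro j hj
    have hne : xS j ≠ 0 := mem_supp.mp hj
    exact lt_of_le_of_ne (sq_nonneg _) (Ne.symm (pow_ne_zero 2 hne))
  have hB0Q : B 0 = ∑ j ∈ S, xS j ^ 2 := by
    rw [hB]
    simp only [hSn0, Finset.sdiff_empty]
    rfl
  have hinvtop : ∀ hS : S.Nonempty,
      g * S.sup' hS (fun j => xS j ^ 2) ≤ ∑ j ∈ S, xS j ^ 2 := by
    intro hS
    obtain ⟨j0, hj0S, hj0⟩ := Finset.exists_mem_eq_sup' hS (fun j => xS j ^ 2)
    rw [hj0]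
    have h1 : xS j0 ^ 2 ≤ ∑ j ∈ S, xS j ^ 2 :=
      Finset.single_le_sum (fun j _ => sq_nonneg (xS j)) hj0S
    nlinarith [sq_nonneg (xS j0)]
  obtain ⟨n, hn0, hnL⟩ := SPcount.counting g L hg0 hg1 hL (S.card) S
    (fun j => xS j ^ 2) B (∑ j ∈ S, xS j ^ 2) le_rfl hq hstepB hBstruct
    (le_of_eq hB0Q) hinvtop
  -- translate the iteration bound
  have hlog2pos : (0:ℝ) < Real.log 2 := Real.log_pos (by norm_num)
  have hnK : (n : ℝ) * L ≤ (K : ℝ) * (L + Real.log 2) := by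
    have h1 : max 0 ((S.card : ℝ) * (L + Real.log 2)
        + Real.log (min (∑ j ∈ S, xS j ^ 2) (∑ j ∈ S, xS j ^ 2))
        - Real.log (∑ j ∈ S, xS j ^ 2)) = (S.card : ℝ) * (L + Real.log 2) := by
      rw [min_self]
      have h2 : (0:ℝ) ≤ (S.card : ℝ) * (L + Real.log 2) :=
        mul_nonneg (by positivity) (by linarith)
      rw [max_eq_right (by linarith)]
      ring
    rw [h1] at hnL
    have h3 : (S.card : ℝ) ≤ (K : ℝ) := by exact_mod_cast hxS
    have h4 : (S.card : ℝ) * (L + Real.log 2) ≤ (K : ℝ) * (L + Real.log 2) :=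
      mul_le_mul_of_nonneg_right h3 (by linarith)
    linarith
  have hcL : c * L = Real.log 4 + L := by
    have h4 : Real.log (4 / g) = Real.log 4 - Real.log g := by
      rw [Real.log_div (by norm_num) hg0.ne']
    rw [hc]
    have h5 : Real.log (4 / g) / L * L = Real.log (4 / g) := by
      field_simp
    rw [h5, h4, hlogg]
    ring
  have hlog4 : Real.log 4 = 2 * Real.log 2 := by
    rw [show (4:ℝ) = 2 ^ 2 by norm_num, Real.log_pow]
    push_cast
    ring
  have hncK : (n : ℝ) ≤ c * K := by
    have h1 : (n : ℝ) * L ≤ (K : ℝ) * (L + Real.log 2) := hnK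
    have h2 : (K : ℝ) * (L + Real.log 2) ≤ (K : ℝ) * (c * L) := by
      apply mul_le_mul_of_nonneg_left _ (by positivity)
      rw [hcL, hlog4]
      linarith
    have h3 : (n : ℝ) * L ≤ (c * K) * L := by
      calc (n : ℝ) * L ≤ (K : ℝ) * (c * L) := le_trans h1 h2
        _ = (c * K) * L := by ring
    exact le_of_mul_le_mul_right h3 hLpos
  set N := ⌈c * (K : ℝ)⌉₊ with hN
  have hnN : n ≤ N := by
    have h1 : (n : ℝ) ≤ (N : ℝ) := le_trans hncK (Nat.le_ceil _)
    exact_mod_cast h1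
  -- monotonicity of B
  have hstep1 : ∀ t, B (t + 1) ≤ B t := by
    intro t
    have h1 := hstepB t
    nlinarith [hBnonneg t]
  have hBmono : ∀ a b : ℕ, a ≤ b → B b ≤ B a := by
    intro a b hab
    induction b with
    | zero => rw [Nat.le_zero.mp hab]
    | succ b ih =>
      rcases Nat.lt_or_ge a (b + 1) with hlt | hge
      · exact le_trans (hstep1 b) (ih (Nat.lt_succ_iff.mp hlt))
      · rw [le_antisymm hab hge]
  have hBN : B N = 0 :=
    le_antisymm (le_trans (hBmono n N hnN) hn0) (hBnonneg N)
  -- N ≥ 1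
  have hc1 : 1 < c := by
    have h1 : 0 < Real.log 4 := by rw [hlog4]; linarith
    have h2 : c = (Real.log 4 + L) / L := by
      field_simp at hcL ⊢
      linarith [hcL]
    rw [h2, lt_div_iff₀ hLpos]
    linarith
  have hNpos : 1 ≤ N := by
    rw [hN]
    apply Nat.one_le_ceil_iff.mpr
    have hK1 : (1:ℝ) ≤ (K : ℝ) := by exact_mod_cast hK
    nlinarith
  obtain ⟨N', hN'⟩ : ∃ N', N = N' + 1 := ⟨N - 1, by omega⟩
  -- endgame : exact recovery
  have hsuppsub : supp xS ⊆ SnF N' := by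
    intro j hj
    by_contra hc3
    have hjm : j ∈ S \ SnSeq N := by
      rw [hN', hSnsucc N']
      exact Finset.mem_sdiff.mpr ⟨hj, hc3⟩
    have h0 : xS j ^ 2 = 0 := by
      have := (Finset.sum_eq_zero_iff_of_nonneg
        (fun i (_ : i ∈ S \ SnSeq N) => sq_nonneg (xS i))).mp hBN j hjm
      exact this
    exact (mem_supp.mp hj) (pow_eq_zero_iff (n := 2) (by norm_num) |>.mp h0)
  obtain ⟨-, -, -, -, hSncard', -, hLSxp⟩ := hprop N'
  have hcard3 : (SnF N').card ≤ 3 * K := by omega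
  have := exact_recovery hRIP3 hcard3 hLSxp hsuppsub
  rw [hN']
  exact this
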